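/- If u and v are binary words of the same length with the same number of zeros and u ⊴ v, then F(u) ⊴ F(v), where F is the flip operator. -/

import Mathlib

/-- Flip operator `F`: simultaneously reverse every (automatically pairwise disjoint)
`10` factor, i.e. every zero immediately preceded by a one swaps with that one.
Here `false` plays the role of `0` and `true` of `1`. -/
def flipWord : List Bool → List Bool
  | true :: false :: rest => false :: true :: flipWord rest
  | a :: rest => a :: flipWord rest
  | [] => []

/-- The positions (indices) of the zeros (`false`) of a binary word, left to right. -/
def zeroPositions (w : List Bool) : List ℕ :=
  (List.range w.length).filter (fun i => w.getD i true = false)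

/-- `u ⊴ v` : for every `i`, the `i`-th zero of `u` occurs at a position at most
that of the `i`-th zero of `v`. -/
def WLE (u v : List Bool) : Prop :=
  List.Forall₂ (· ≤ ·) (zeroPositions u) (zeroPositions v)

/-- One tumble move: choose pairwise non-overlapping factors of the form `1^+0^+`
covering every `10` factor, and reverse each in place. `Tumble w u` means `u ∈ T(w)`. -/
inductive Tumble : List Bool → List Bool → Prop
  | nil : Tumble [] []
  | zero {w u} : Tumble w u → Tumble (false :: w) (false :: u)
  | one {w u} : Tumble w u → w.head? ≠ some false → Tumble (true :: w) (true :: u)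
  | block {w u} (a b : ℕ) : 0 < a → 0 < b → Tumble w u →
      Tumble (List.replicate a true ++ List.replicate b false ++ w)
             (List.replicate b false ++ List.replicate a true ++ u)

/-- `TumbleN t w u` : `u` is reachable from `w` by exactly `t` tumble moves. -/
def TumbleN : ℕ → List Bool → List Bool → Prop
  | 0 => Eq
  | t + 1 => fun w u => ∃ v, TumbleN t w v ∧ Tumble v u

/-- The 0/1 projection at threshold `k`: the `i`-th letter is `0` iff `w(i) < k`. -/
def proj (k : ℕ) (w : List ℕ) : List Bool := w.map (fun x => decide (k ≤ x))

/-- Pop-stack operator `P`: partition into maximal strictly decreasing runs and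
reverse each run in place. -/
def popStack (w : List ℕ) : List ℕ :=
  ((w.splitBy (fun a b => decide (b < a))).map List.reverse).flatten

/-- boundary-crossing indicator -/
def chi (w : List Bool) : ℕ → ℕ
  | 0 => 0
  | j + 1 => if w.getD j false = true ∧ w.getD (j+1) true = false then 1 else 0

lemma flip_length (w : List Bool) : (flipWord w).length = w.length := by
  induction w using flipWord.induct with
  | case1 rest ih => simp [flipWord, ih]
  | case2 a rest h ih =>
      rw [flipWord.eq_def]
      match a, rest with
      | true, [] => simp [flipWord]
      | true, true :: r => simp [ih]
      | true, false :: r => exact absurd rfl (fun hh => h r rfl hh)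
      | false, r => simp [ih]
  | case3 => rfl

lemma flip_count (w : List Bool) : (flipWord w).count false = w.count false := by
  induction w using flipWord.induct with
  | case1 rest ih => simp [flipWord, List.count_cons, ih]
  | case2 a rest h ih =>
      rw [flipWord.eq_def]
      match a, rest with
      | true, [] => simp [flipWord]
      | true, true :: r => simp [List.count_cons, ih]
      | true, false :: r => exact absurd rfl (fun hh => h r rfl hh)
      | false, r => simp [List.count_cons, ih]
  | case3 => rfl

lemma take_succ_count (w : List Bool) (n : ℕ) :
    (w.take (n+1)).count false
      = (w.take n).count false + (if w.getD n true = false then 1 else 0) := by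
  induction w generalizing n with
  | nil => simp
  | cons a t ih =>
      cases n with
      | zero => cases a <;> simp [List.count_cons]
      | succ m => simp [List.count_cons, ih m]; omega

lemma flip_take_count (w : List Bool) (k : ℕ) :
    ((flipWord w).take k).count false = (w.take k).count false + chi w k := by
  induction w using flipWord.induct generalizing k with
  | case1 rest ih =>
      match k with
      | 0 => simp [chi]
      | 1 => simp [flipWord, chi, List.count_cons]
      | 2 => simp [flipWord, chi, List.count_cons]
      | (j+3) =>
          show ((false :: true :: flipWord rest).take (j+3)).count false = _
          simp only [List.take_succ_cons, List.count_cons, ih (j+1)]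
          simp only [chi, List.getD_cons_succ]
          split <;> omega
  | case2 a rest h ih =>
      have hne : ¬ (a = true ∧ rest.getD 0 true = false) := by
        rintro ⟨rfl, h0⟩
        match rest with
        | [] => simp at h0
        | b :: r => simp at h0; exact h r rfl (by simp [h0])
      have hfw : flipWord (a :: rest) = a :: flipWord rest := by
        rw [flipWord.eq_def]
        match a, rest with
        | true, [] => rfl
        | true, true :: r => rfl
        | true, false :: r => exact absurd rfl (fun hh => h r rfl hh)
        | false, r => rfl
      rw [hfw]
      match k with
      | 0 => simp [chi]
      | 1 =>
          simp only [List.take_succ_cons, List.take_zero, List.count_cons, List.count_nil, chi]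
          have : ¬ ((a :: rest).getD 0 false = true ∧ (a :: rest).getD 1 true = false) := by
            simpa using hne
          rw [if_neg this]
          cases a <;> simp
      | (j+2) =>
          simp only [List.take_succ_cons, List.count_cons, ih (j+1)]
          have : chi (a :: rest) (j+2) = chi rest (j+1) := by
            simp [chi]
          omega
  | case3 => cases k <;> simp [flipWord, chi]

lemma countP_lt_zeroPositions (w : List Bool) (k : ℕ) :
    (zeroPositions w).countP (fun i => decide (i < k)) = (w.take k).count false := by
  unfold zeroPositions
  rw [List.countP_filter]
  induction w generalizing k with
  | nil => simp
  | cons a t ih =>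
      simp only [List.length_cons, List.range_succ_eq_map, List.countP_cons, List.countP_map]
      cases k with
      | zero => simp
      | succ j =>
          have h1 : (List.countP
              ((fun a_1 => decide (a_1 < j + 1) && decide ((a :: t).getD a_1 true = false)) ∘ Nat.succ)
              (List.range t.length))
              = List.countP (fun i => decide (i < j) && decide (t.getD i true = false))
                (List.range t.length) := by
            apply List.countP_congr
            intro x _
            simp [Function.comp, Nat.succ_lt_succ_iff]
          rw [h1, ih j]
          cases a <;> simp [List.count_cons]

lemma forall₂_countP {l1 l2 : List ℕ} (h : List.Forall₂ (· ≤ ·) l1 l2) (k : ℕ) :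
    l2.countP (fun i => decide (i < k)) ≤ l1.countP (fun i => decide (i < k)) := by
  induction h with
  | nil => simp
  | @cons a b l₁ l₂ hab _ ih =>
      simp only [List.countP_cons, decide_eq_true_eq]
      by_cases hb : b < k
      · rw [if_pos hb, if_pos (show a < k by omega)]; omega
      · rw [if_neg hb]; split <;> omega

lemma sorted_forall₂ : ∀ (l1 l2 : List ℕ), l1.Pairwise (· < ·) → l2.Pairwise (· < ·) →
    l1.length = l2.length →
    (∀ k, l2.countP (fun i => decide (i < k)) ≤ l1.countP (fun i => decide (i < k))) →
    List.Forall₂ (· ≤ ·) l1 l2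
  | [], [], _, _, _, _ => List.Forall₂.nil
  | [], b :: t2, _, _, hl, _ => by simp at hl
  | a :: t1, [], _, _, hl, _ => by simp at hl
  | a :: t1, b :: t2, hs1, hs2, hl, hc => by
      have hab : a ≤ b := by
        have h1 := hc (b + 1)
        have h2 : 0 < (b :: t2).countP (fun i => decide (i < b + 1)) := by
          simp [List.countP_cons]
        have h3 : 0 < (a :: t1).countP (fun i => decide (i < b + 1)) := by omega
        rw [List.countP_pos_iff] at h3
        obtain ⟨x, hx, hxk⟩ := h3
        simp only [decide_eq_true_eq] at hxk
        rcases List.mem_cons.mp hx with rfl | hx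
        · omega
        · have := (List.pairwise_cons.mp hs1).1 x hx
          omega
      refine List.Forall₂.cons hab (sorted_forall₂ t1 t2 (List.pairwise_cons.mp hs1).2
        (List.pairwise_cons.mp hs2).2 (by simpa using hl) ?_)
      intro k
      have h1 := hc k
      simp only [List.countP_cons] at h1
      by_cases hak : a < k
      · by_cases hbk : b < k
        · simp [hak, hbk] at h1; omega
        · have hz : t2.countP (fun i => decide (i < k)) = 0 := by
            rw [List.countP_eq_zero]
            intro x hx
            have := (List.pairwise_cons.mp hs2).1 x hx
            simp only [decide_eq_true_eq]
            omega
          omega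
      · have hbk : ¬ b < k := by omega
        simp [hak, hbk] at h1; omega

lemma zp_sorted (w : List Bool) : (zeroPositions w).Pairwise (· < ·) :=
  (List.pairwise_lt_range (n := w.length)).filter _

lemma zp_length (w : List Bool) : (zeroPositions w).length = w.count false := by
  have h1 : (zeroPositions w).countP (fun i => decide (i < w.length))
      = (zeroPositions w).length := by
    rw [List.countP_eq_length]
    intro a ha
    have : a ∈ List.range w.length := List.mem_of_mem_filter ha
    simpa using List.mem_range.mp this
  rw [← h1, countP_lt_zeroPositions, List.take_length]

lemma key_ineq (u v : List Bool) (hlen : u.length = v.length)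
    (hf : ∀ k, (v.take k).count false ≤ (u.take k).count false) (k : ℕ) :
    (v.take k).count false + chi v k ≤ (u.take k).count false + chi u k := by
  cases k with
  | zero => simp [chi]
  | succ j =>
      simp only [chi]
      by_cases hv : v.getD j false = true ∧ v.getD (j+1) true = false
      · by_cases hu : u.getD j false = true ∧ u.getD (j+1) true = false
        · rw [if_pos hv, if_pos hu]
          have := hf (j+1); omega
        · rw [if_pos hv, if_neg hu]
          -- positions in range
          have hj1v : j + 1 < v.length := by
            by_contra hc
            have h2 := hv.2
            rw [List.getD_eq_default _ _ (by omega)] at h2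
            simp at h2
          have hj1u : j + 1 < u.length := by omega
          by_cases hu1 : u.getD (j+1) true = false
          · -- then u.getD j false ≠ true, so it's false
            have huj : u.getD j false = false := by
              cases hgd : u.getD j false with
              | false => rfl
              | true => exact absurd ⟨hgd, hu1⟩ hu
            -- step at j
            have su : (u.take (j+1)).count false = (u.take j).count false + 1 := by
              rw [take_succ_count]
              have : u.getD j true = false := by
                have hjlt : j < u.length := by omega
                rwa [List.getD_eq_getElem _ _ hjlt, ← List.getD_eq_getElem _ false hjlt]
              rw [if_pos this]
            have sv : (v.take (j+1)).count false = (v.take j).count false := by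
              rw [take_succ_count]
              have : ¬ v.getD j true = false := by
                have hjlt : j < v.length := by omega
                rw [List.getD_eq_getElem _ _ hjlt]
                rw [List.getD_eq_getElem _ false hjlt] at hv
                simp [hv.1]
              rw [if_neg this]
              omega
            have := hf j
            omega
          · -- u[j+1] = true
            have hut : u.getD (j+1) true = true := by
              cases hgd : u.getD (j+1) true with
              | false => exact absurd hgd hu1
              | true => rfl
            have su : (u.take (j+2)).count false = (u.take (j+1)).count false := by
              rw [take_succ_count, if_neg (by rw [hut]; simp)]
              omega
            have sv : (v.take (j+2)).count false = (v.take (j+1)).count false + 1 := by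
              rw [take_succ_count, if_pos hv.2]
            have := hf (j+2)
            omega
      · rw [if_neg hv]
        have := hf (j+1)
        split <;> omega

/-- Flip is monotone for `⊴`. -/
theorem stmt2 (u v : List Bool) (hlen : u.length = v.length)
    (hz : u.count false = v.count false) (h : WLE u v) :
    WLE (flipWord u) (flipWord v) := by
  apply sorted_forall₂ _ _ (zp_sorted _) (zp_sorted _)
  · rw [zp_length, zp_length, flip_count, flip_count, hz]
  · intro k
    rw [countP_lt_zeroPositions, countP_lt_zeroPositions, flip_take_count, flip_take_count]
    exact key_ineq u v hlen (fun k => by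
      have := forall₂_countP h k
      rwa [countP_lt_zeroPositions, countP_lt_zeroPositions] at this) k
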